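/- An ordered binary structure R = (V, ≤, (ρ_i)_{i∈I}) admits a finite monomorphic decomposition if and only if there exists a finite partition (V_1, …, V_m) of V into intervals of the linear order (V, ≤) such that every isomorphism f between finite induced suborders of (V, ≤) that preserves each interval (i.e., f maps A ∩ V_j into V_j for each j, where A is the domain of f) is a local isomorphism of R, that is, an isomorphism between the corresponding induced substructures of R. -/

import Mathlib

/-- An ordered binary structure: a domain `V`, a linear order `le` on `V`,
and a family of binary relations `rel i` on `V` indexed by `ι`. -/
structure OrdBin (ι : Type) where
  V : Type
  le : V → V → Prop
  linear : IsLinearOrder V le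
  rel : ι → V → V → Prop

namespace OrdBin

variable {ι : Type}

/-- The substructure induced on a subset `A` of the domain. -/
def restrict (R : OrdBin ι) (A : Set R.V) : OrdBin ι where
  V := A
  le := fun a b => R.le a.1 b.1
  linear := by
    haveI := R.linear
    exact
      { refl := fun a => refl_of R.le a.1
        trans := fun a b c hab hbc => trans_of R.le hab hbc
        antisymm := fun a b hab hba => Subtype.ext (antisymm_of R.le hab hba)
        total := fun a b => total_of R.le a.1 b.1 }
  rel := fun i a b => R.rel i a.1 b.1

/-- Isomorphism of ordered binary structures: a bijection of the domains preserving
the linear order and each binary relation. -/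
def Iso (R S : OrdBin ι) : Prop :=
  ∃ e : R.V ≃ S.V, (∀ x y : R.V, R.le x y ↔ S.le (e x) (e y)) ∧
    ∀ (i : ι) (x y : R.V), R.rel i x y ↔ S.rel i (e x) (e y)

/-- `R` embeds in `S` if `R` is isomorphic to an induced substructure of `S`. -/
def Embeds (R S : OrdBin ι) : Prop :=
  ∃ A : Set S.V, Iso R (S.restrict A)

/-- `B` is a monomorphic part of `R`: any two finite subsets of the domain of the
same cardinality which agree outside `B` induce isomorphic substructures. -/
def MonoPart (R : OrdBin ι) (B : Set R.V) : Prop :=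
  ∀ A A' : Set R.V, A.Finite → A'.Finite → A.ncard = A'.ncard →
    A \ B = A' \ B → Iso (R.restrict A) (R.restrict A')

/-- A monomorphic decomposition of `R`: a partition of the domain into monomorphic parts. -/
def MonoDecomp (R : OrdBin ι) (P : Set (Set R.V)) : Prop :=
  Setoid.IsPartition P ∧ ∀ B ∈ P, R.MonoPart B

/-- `R` has a monomorphic decomposition with finitely many blocks. -/
def HasFiniteMonoDecomp (R : OrdBin ι) : Prop :=
  ∃ P : Set (Set R.V), R.MonoDecomp P ∧ P.Finite

/-- A hereditary class of finite ordered binary structures. -/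
def Hereditary (C : Set (OrdBin ι)) : Prop :=
  (∀ R ∈ C, Finite R.V) ∧ ∀ R ∈ C, ∀ S : OrdBin ι, Embeds S R → S ∈ C

/-- `x` and `y` are `F`-equivalent: the substructures induced on `{x} ∪ F` and
`{y} ∪ F` are isomorphic. -/
def EqF (R : OrdBin ι) (F : Set R.V) (x y : R.V) : Prop :=
  Iso (R.restrict (insert x F)) (R.restrict (insert y F))

/-- `x ≃_{m,R} y`: `x` and `y` are `F`-equivalent for every `m`-element subset `F`
of `V \ {x, y}`. -/
def EqM (R : OrdBin ι) (m : ℕ) (x y : R.V) : Prop :=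
  ∀ F : Set R.V, F.Finite → F.ncard = m → x ∉ F → y ∉ F → EqF R F x y

/-- `x ≃_{≤m,R} y`: `x ≃_{m',R} y` for every `m' ≤ m`. -/
def EqLe (R : OrdBin ι) (m : ℕ) (x y : R.V) : Prop :=
  ∀ m' ≤ m, EqM R m' x y

/-- `x ≃_R y`: `x ≃_{m,R} y` for every `m`. -/
def EqR (R : OrdBin ι) (x y : R.V) : Prop :=
  ∀ m : ℕ, EqM R m x y

/-- `d(x,y) = d(x',y')`: the pair of truth values `(ρ_i(x,y), ρ_i(y,x))` agrees with
`(ρ_i(x',y'), ρ_i(y',x'))` for every `i`. -/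
def dEq (R : OrdBin ι) (x y x' y' : R.V) : Prop :=
  ∀ i : ι, (R.rel i x y ↔ R.rel i x' y') ∧ (R.rel i y x ↔ R.rel i y' x')

/-- `A` is an interval of the linear order `(V, le)`. -/
def IntervalLe (R : OrdBin ι) (A : Set R.V) : Prop :=
  ∀ u ∈ A, ∀ w ∈ A, ∀ z : R.V, R.le u z → R.le z w → z ∈ A

/-- `A` is an interval of `R`: an interval of the order such that all elements of `A`
have the same relations to each element outside `A`. -/
def IntervalR (R : OrdBin ι) (A : Set R.V) : Prop :=
  IntervalLe R A ∧ ∀ u ∈ A, ∀ u' ∈ A, ∀ w ∉ A, dEq R u w u' w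

/-- `R` is `n`-monomorphic: the substructures induced on any two `n`-element subsets
of the domain are isomorphic. -/
def NMono (R : OrdBin ι) (n : ℕ) : Prop :=
  ∀ A A' : Set R.V, A.Finite → A'.Finite → A.ncard = n → A'.ncard = n →
    Iso (R.restrict A) (R.restrict A')

/-- `R` is `(≤n)`-monomorphic. -/
def LeMono (R : OrdBin ι) (n : ℕ) : Prop :=
  ∀ m ≤ n, NMono R m

/-- `R` is monomorphic. -/
def Mono (R : OrdBin ι) : Prop :=
  ∀ n : ℕ, NMono R n

/-- The profile of `R`: the number of induced substructures on `n`-element subsets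
of the domain, counted up to isomorphism. -/
noncomputable def profileR (R : OrdBin ι) (n : ℕ) : ℕ :=
  Nat.card (Quot fun (A B : {A : Set R.V // A.Finite ∧ A.ncard = n}) =>
    Iso (R.restrict A.1) (R.restrict B.1))

/-- The profile of a class `C`: the number of members of `C` with exactly `n`
elements, counted up to isomorphism. -/
noncomputable def profileC (C : Set (OrdBin ι)) (n : ℕ) : ℕ :=
  Nat.card (Quot fun (R S : {R : OrdBin ι // R ∈ C ∧ Nat.card R.V = n}) =>
    Iso R.1 S.1)

end OrdBin

/-- The Fibonacci sequence with `F 0 = F 1 = 1`. -/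
def fib1 : ℕ → ℕ
  | 0 => 1
  | 1 => 1
  | n + 2 => fib1 (n + 1) + fib1 n



namespace OrdBin

variable {ι : Type}

noncomputable def linOrd (R : OrdBin ι) : LinearOrder R.V :=
  letI := R.linear
  { le := R.le
    le_refl := fun a => refl_of R.le a
    le_trans := fun a b c => trans_of R.le
    le_antisymm := fun a b h h' => antisymm_of R.le h h'
    le_total := fun a b => total_of R.le a b
    toDecidableLE := Classical.decRel _ }

theorem Iso.refl (R : OrdBin ι) : Iso R R :=
  ⟨Equiv.refl _, fun _ _ => Iff.rfl, fun _ _ _ => Iff.rfl⟩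

theorem Iso.symm {R S : OrdBin ι} (h : Iso R S) : Iso S R := by
  obtain ⟨e, h1, h2⟩ := h
  exact ⟨e.symm, fun x y => by simpa using (h1 (e.symm x) (e.symm y)).symm,
    fun i x y => by simpa using (h2 i (e.symm x) (e.symm y)).symm⟩

theorem Iso.trans {R S T : OrdBin ι} (h : Iso R S) (h' : Iso S T) : Iso R T := by
  obtain ⟨e, h1, h2⟩ := h
  obtain ⟨f, g1, g2⟩ := h'
  exact ⟨e.trans f, fun x y => (h1 x y).trans (g1 (e x) (e y)),
    fun i x y => (h2 i x y).trans (g2 i (e x) (e y))⟩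


theorem iso_restrict_of_map (R : OrdBin ι) {A B : Set R.V} (f : A → R.V)
    (hmem : ∀ a, f a ∈ B) (hinj : Function.Injective f)
    (hsurj : ∀ b ∈ B, ∃ a, f a = b)
    (hle : ∀ a b : A, R.le a.1 b.1 ↔ R.le (f a) (f b))
    (hrel : ∀ (i : ι) (a b : A), R.rel i a.1 b.1 ↔ R.rel i (f a) (f b)) :
    Iso (R.restrict A) (R.restrict B) := by
  have hbij : Function.Bijective (fun a : A => (⟨f a, hmem a⟩ : B)) := by
    constructor
    · intro a b h
      exact hinj (congrArg Subtype.val h)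
    · intro b
      obtain ⟨a, ha⟩ := hsurj b.1 b.2
      exact ⟨a, Subtype.ext ha⟩
  exact ⟨Equiv.ofBijective _ hbij, fun x y => hle x y, fun i x y => hrel i x y⟩

theorem order_map_unique (R : OrdBin ι) {A : Set R.V} (hA : A.Finite)
    {f g : A → R.V}
    (hf : ∀ a b : A, R.le a.1 b.1 ↔ R.le (f a) (f b))
    (hg : ∀ a b : A, R.le a.1 b.1 ↔ R.le (g a) (g b))
    (hrange : Set.range f = Set.range g) : f = g := by
  letI := R.linOrd
  haveI : Fintype A := hA.fintype
  have hfm : StrictMono f := by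
    intro a b hab
    rw [lt_iff_le_not_ge] at hab ⊢
    exact ⟨(hf a b).1 hab.1, fun h => hab.2 ((hf b a).2 h)⟩
  have hgm : StrictMono g := by
    intro a b hab
    rw [lt_iff_le_not_ge] at hab ⊢
    exact ⟨(hg a b).1 hab.1, fun h => hab.2 ((hg b a).2 h)⟩
  have hfin : (Set.range f).Finite := Set.finite_range f
  set s : Finset R.V := hfin.toFinset with hs
  have hscard : s.card = Fintype.card A := by
    have h1 : (Set.range f).ncard = Nat.card A := by
      rw [← Nat.card_coe_set_eq]
      exact Nat.card_range_of_injective hfm.injective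
    rw [hs, ← Set.ncard_eq_toFinset_card _ hfin, h1, Nat.card_eq_fintype_card]
  set e := monoEquivOfFin A rfl with he
  have h1 : f ∘ ⇑e = ⇑(s.orderEmbOfFin hscard) := by
    apply Finset.orderEmbOfFin_unique hscard
    · intro x
      rw [hs, Set.Finite.mem_toFinset]
      exact Set.mem_range_self _
    · exact hfm.comp e.strictMono
  have h2 : g ∘ ⇑e = ⇑(s.orderEmbOfFin hscard) := by
    apply Finset.orderEmbOfFin_unique hscard
    · intro x
      rw [hs, Set.Finite.mem_toFinset, hrange]
      exact Set.mem_range_self _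
    · exact hgm.comp e.strictMono
  funext a
  have := congrFun (h1.trans h2.symm) (e.symm a)
  simpa using this

/-- Transfer: if restrictions to finite `A`, `B` are isomorphic and `g` is an
order-preserving bijection from `A` onto `B`, then `g` preserves the relations. -/
theorem rel_transfer (R : OrdBin ι) {A B : Set R.V} (hA : A.Finite)
    (hiso : Iso (R.restrict A) (R.restrict B)) (g : A → R.V)
    (hmem : ∀ a, g a ∈ B) (hinj : Function.Injective g)
    (hsurj : ∀ b ∈ B, ∃ a, g a = b)
    (hle : ∀ a b : A, R.le a.1 b.1 ↔ R.le (g a) (g b)) :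
    ∀ (i : ι) (a b : A), R.rel i a.1 b.1 ↔ R.rel i (g a) (g b) := by
  obtain ⟨e, h1, h2⟩ := hiso
  set f : A → R.V := fun a => (e a).1 with hf
  have hfeq : f = g := by
    apply order_map_unique R hA (fun a b => h1 a b) hle
    apply Set.eq_of_subset_of_subset
    · rintro _ ⟨a, rfl⟩
      obtain ⟨a', ha'⟩ := hsurj (e a).1 (e a).2
      exact ⟨a', ha'⟩
    · rintro _ ⟨a, rfl⟩
      exact ⟨e.symm ⟨g a, hmem a⟩, congrArg Subtype.val (e.apply_symm_apply _)⟩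
  intro i a b
  have := h2 i a b
  rw [show (R.restrict B).rel i (e a) (e b) = R.rel i (f a) (f b) from rfl] at this
  rwa [hfeq] at this

theorem EqR.iso_insert {R : OrdBin ι} {x y : R.V} (h : EqR R x y) {F : Set R.V}
    (hF : F.Finite) (hx : x ∉ F) (hy : y ∉ F) :
    Iso (R.restrict (insert x F)) (R.restrict (insert y F)) :=
  h F.ncard F hF rfl hx hy

theorem EqR.refl' (R : OrdBin ι) (x : R.V) : EqR R x x :=
  fun _ _ _ _ _ _ => Iso.refl _

theorem EqR.symm' {R : OrdBin ι} {x y : R.V} (h : EqR R x y) : EqR R y x :=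
  fun m F hF hFm hy hx => (h m F hF hFm hx hy).symm

theorem EqR.trans' {R : OrdBin ι} {x y z : R.V} (hxy : EqR R x y) (hyz : EqR R y z) :
    EqR R x z := by
  intro m F hF hFm hx hz
  rcases eq_or_ne x z with rfl | hxz
  · exact Iso.refl _
  by_cases hy : y ∈ F
  · have hyx : y ≠ x := fun h => hx (h ▸ hy)
    have hyz' : y ≠ z := fun h => hz (h ▸ hy)
    set F' := F \ {y} with hF'
    have hF'fin : F'.Finite := hF.diff
    have hxF' : x ∉ F' := fun h => hx h.1
    have hzF' : z ∉ F' := fun h => hz h.1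
    have hyF' : y ∉ F' := fun h => h.2 rfl
    have hFeq : insert y F' = F := by
      rw [hF', Set.insert_diff_singleton, Set.insert_eq_self.2 hy]
    have step1 : Iso (R.restrict (insert x F)) (R.restrict (insert x (insert z F'))) := by
      have h1 := hyz.iso_insert (hF'fin.insert x)
        (by simp [hyx, hyF']) (by simp [Ne.symm hxz, hzF'])
      rw [Set.insert_comm y x F', Set.insert_comm z x F', hFeq] at h1
      exact h1
    have step2 : Iso (R.restrict (insert x (insert z F'))) (R.restrict (insert z F)) := by
      have h2 := hxy.iso_insert (hF'fin.insert z)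
        (by simp [hxz, hxF']) (by simp [hyz', hyF'])
      rw [Set.insert_comm y z F', hFeq] at h2
      exact h2
    exact step1.trans step2
  · exact (hxy.iso_insert hF hx hy).trans (hyz.iso_insert hF hy hz)

theorem MonoPart.eqR {R : OrdBin ι} {B : Set R.V} (hB : MonoPart R B) {x y : R.V}
    (hx : x ∈ B) (hy : y ∈ B) : EqR R x y := by
  intro m F hF hFm hxF hyF
  apply hB (insert x F) (insert y F) (hF.insert x) (hF.insert y)
  · rw [Set.ncard_insert_of_notMem hxF hF, Set.ncard_insert_of_notMem hyF hF]
  · rw [Set.insert_diff_of_mem _ hx, Set.insert_diff_of_mem _ hy]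

/-- The order-reversed structure. -/
def oflip (R : OrdBin ι) : OrdBin ι where
  V := R.V
  le := fun a b => R.le b a
  linear := by
    haveI := R.linear
    exact
      { refl := fun a => refl_of R.le a
        trans := fun a b c hab hbc => trans_of R.le hbc hab
        antisymm := fun a b hab hba => antisymm_of R.le hba hab
        total := fun a b => total_of R.le b a }
  rel := R.rel

theorem iso_oflip {R : OrdBin ι} {A B : Set R.V} :
    Iso (R.restrict A) (R.restrict B) → Iso (R.oflip.restrict A) (R.oflip.restrict B) := by
  rintro ⟨e, h1, h2⟩
  exact ⟨e, fun x y => h1 y x, h2⟩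

theorem MonoPart.oflip {R : OrdBin ι} {B : Set R.V} (h : MonoPart R B) :
    MonoPart R.oflip B :=
  fun A A' hA hA' hc hd => iso_oflip (h A A' hA hA' hc hd)

theorem EqR.oflip {R : OrdBin ι} {x y : R.V} (h : EqR R x y) : EqR R.oflip x y :=
  fun m F hF hFm hx hy => iso_oflip (h m F hF hFm hx hy)

/-- The chaining lemma: if two finite sets have the same number of elements in each
`EqR`-class, the induced substructures are isomorphic. -/
theorem chain_iso (R : OrdBin ι) :
    ∀ n (A A' : Set R.V), A.Finite → A'.Finite →
      (∀ v : R.V, (A ∩ {t | EqR R v t}).ncard = (A' ∩ {t | EqR R v t}).ncard) →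
      (A \ A').ncard = n → Iso (R.restrict A) (R.restrict A') := by
  intro n
  induction n with
  | zero =>
    intro A A' hA hA' hcount hdiff
    have hsub : A ⊆ A' := by
      rw [← Set.diff_eq_empty]
      exact (Set.ncard_eq_zero hA.diff).1 hdiff
    rcases Set.eq_or_ssubset_of_subset hsub with rfl | hss
    · exact Iso.refl _
    · exfalso
      obtain ⟨y, hyA', hyA⟩ := Set.exists_of_ssubset hss
      have h1 : A ∩ {t | EqR R y t} ⊂ A' ∩ {t | EqR R y t} := by
        constructor
        · exact Set.inter_subset_inter_left _ hsub
        · intro hsub2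
          exact hyA (hsub2 ⟨hyA', EqR.refl' R y⟩).1
      exact absurd (hcount y) (Nat.ne_of_lt (Set.ncard_lt_ncard h1 (hA'.inter_of_left _)))
  | succ n ih =>
    intro A A' hA hA' hcount hdiff
    obtain ⟨x, hxA, hxA'⟩ := Set.nonempty_of_ncard_ne_zero (s := A \ A') (by omega)
    set C := {t | EqR R x t} with hC
    have hxC : x ∈ C := EqR.refl' R x
    have key : ((A' ∩ C) \ A).Nonempty := by
      apply Set.nonempty_of_ncard_ne_zero
      intro h0
      have e1 := Set.ncard_inter_add_ncard_diff_eq_ncard (A ∩ C) A' (hA.inter_of_left _)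
      have e2 := Set.ncard_inter_add_ncard_diff_eq_ncard (A' ∩ C) A (hA'.inter_of_left _)
      have hcx : (A ∩ C).ncard = (A' ∩ C).ncard := hcount x
      have hAC : (A ∩ C) ∩ A' = (A' ∩ C) ∩ A := by
        ext a
        constructor
        · rintro ⟨⟨h1, h2⟩, h3⟩; exact ⟨⟨h3, h2⟩, h1⟩
        · rintro ⟨⟨h1, h2⟩, h3⟩; exact ⟨⟨h3, h2⟩, h1⟩
      rw [hAC] at e1
      have hz : ((A ∩ C) \ A').ncard = 0 := by omega
      have hxx : x ∈ (A ∩ C) \ A' := ⟨⟨hxA, hxC⟩, hxA'⟩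
      exact (Set.ncard_ne_zero_of_mem hxx (hA.inter_of_left _).diff) hz
    obtain ⟨y, hyAC, hyA⟩ := key
    have hxy : EqR R x y := hyAC.2
    set A₂ := insert y (A \ {x}) with hA₂
    have hA₂fin : A₂.Finite := hA.diff.insert y
    have hins : insert x (A \ {x}) = A := by
      rw [Set.insert_diff_singleton, Set.insert_eq_self.2 hxA]
    have iso1 : Iso (R.restrict A) (R.restrict A₂) := by
      have h := hxy.iso_insert (show (A \ {x}).Finite from hA.diff) (fun h => h.2 rfl) (fun h => hyA h.1)
      rwa [hins] at h
    have iso2 : Iso (R.restrict A₂) (R.restrict A') := by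
      apply ih A₂ A' hA₂fin hA'
      · intro v
        by_cases hvx : EqR R v x
        · have hvy : EqR R v y := hvx.trans' hxy
          have h1 : A₂ ∩ {t | EqR R v t} = insert y ((A ∩ {t | EqR R v t}) \ {x}) := by
            ext a
            simp only [hA₂, Set.mem_inter_iff, Set.mem_insert_iff, Set.mem_diff,
              Set.mem_singleton_iff, Set.mem_setOf_eq]
            constructor
            · rintro ⟨rfl | ⟨haA, hax⟩, hva⟩
              · exact Or.inl rfl
              · exact Or.inr ⟨⟨haA, hva⟩, hax⟩
            · rintro (rfl | ⟨⟨haA, hva⟩, hax⟩)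
              · exact ⟨Or.inl rfl, hvy⟩
              · exact ⟨Or.inr ⟨haA, hax⟩, hva⟩
          have hxmem : x ∈ A ∩ {t | EqR R v t} := ⟨hxA, hvx⟩
          have hynot : y ∉ (A ∩ {t | EqR R v t}) \ {x} := fun h => hyA h.1.1
          rw [h1, Set.ncard_insert_of_notMem hynot (((hA.inter_of_left _)).diff),
            Set.ncard_diff_singleton_of_mem hxmem]
          have hpos : 0 < (A ∩ {t | EqR R v t}).ncard :=
            (Set.ncard_pos (hA.inter_of_left _)).2 ⟨x, hxmem⟩
          rw [hcount v] at hpos ⊢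
          omega
        · have h1 : A₂ ∩ {t | EqR R v t} = A ∩ {t | EqR R v t} := by
            ext a
            simp only [hA₂, Set.mem_inter_iff, Set.mem_insert_iff, Set.mem_diff,
              Set.mem_singleton_iff, Set.mem_setOf_eq]
            constructor
            · rintro ⟨rfl | ⟨haA, hax⟩, hva⟩
              · exact absurd (hva.trans' hxy.symm') hvx
              · exact ⟨haA, hva⟩
            · rintro ⟨haA, hva⟩
              refine ⟨Or.inr ⟨haA, ?_⟩, hva⟩
              intro h
              rw [h] at hva
              exact hvx hva
          rw [h1, hcount v]
      · have h1 : A₂ \ A' = (A \ A') \ {x} := by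
          rw [hA₂, Set.insert_diff_of_mem _ hyAC.1, Set.diff_diff_comm]
        rw [h1, Set.ncard_diff_singleton_of_mem (Set.mem_diff x |>.2 ⟨hxA, hxA'⟩), hdiff]
        omega
    exact iso1.trans iso2

/-- Every `EqR`-class is a monomorphic part. -/
theorem class_monoPart (R : OrdBin ι) (v : R.V) : MonoPart R {t | EqR R v t} := by
  intro A A' hA hA' hc hd
  set C := {t | EqR R v t} with hC
  apply chain_iso R ((A \ A').ncard) A A' hA hA' _ rfl
  intro u
  by_cases huv : EqR R u v
  · have hcu : {t | EqR R u t} = C := by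
      ext a
      exact ⟨fun h => huv.symm'.trans' h, fun h => huv.trans' h⟩
    rw [hcu]
    have e1 := Set.ncard_inter_add_ncard_diff_eq_ncard A C hA
    have e2 := Set.ncard_inter_add_ncard_diff_eq_ncard A' C hA'
    rw [hd] at e1
    omega
  · have h1 : A ∩ {t | EqR R u t} = A' ∩ {t | EqR R u t} := by
      ext a
      simp only [Set.mem_inter_iff, Set.mem_setOf_eq]
      constructor
      · rintro ⟨haA, hua⟩
        have haC : a ∉ C := fun h => huv (hua.trans' h.symm')
        have : a ∈ A' \ C := hd ▸ (⟨haA, haC⟩ : a ∈ A \ C)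
        exact ⟨this.1, hua⟩
      · rintro ⟨haA', hua⟩
        have haC : a ∉ C := fun h => huv (hua.trans' h.symm')
        have : a ∈ A \ C := hd ▸ (⟨haA', haC⟩ : a ∈ A' \ C) 
        exact ⟨this.1, hua⟩
    rw [h1]

/-- Key lemma: an alternating increasing sequence with `u`'s in a monomorphic part `C`
and `w`'s outside, with `u`'s pairwise equivalent and `w`'s pairwise equivalent,
forces `u 0` and `w 0` to be equivalent. -/
theorem key_contra (R : OrdBin ι) {C : Set R.V} (hC : MonoPart R C)
    (u w : ℕ → R.V)
    (hu : ∀ n, u n ∈ C)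
    (huu : ∀ n m, EqR R (u n) (u m)) (hww : ∀ n m, EqR R (w n) (w m))
    (hc1 : ∀ n, R.le (u n) (w n) ∧ u n ≠ w n)
    (hc2 : ∀ n, R.le (w n) (u (n+1)) ∧ w n ≠ u (n+1))
    (hwC : ∀ n, w n ∉ C) :
    EqR R (u 0) (w 0) := by
  classical
  letI := R.linOrd
  have hlt1 : ∀ n, u n < w n := fun n => lt_of_le_of_ne (hc1 n).1 (hc1 n).2
  have hlt2 : ∀ n, w n < u (n+1) := fun n => lt_of_le_of_ne (hc2 n).1 (hc2 n).2
  have humono : StrictMono u := strictMono_nat_of_lt_succ fun n => (hlt1 n).trans (hlt2 n)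
  have hwmono : StrictMono w := strictMono_nat_of_lt_succ fun n => (hlt2 n).trans (hlt1 (n+1))
  intro m F hF hFm hu0F hw0F
  have hbad : ({n | u n ∈ F} ∪ {n | u (n+1) ∈ F} ∪ {n | w n ∈ F}
      ∪ {n | ∃ f ∈ F, u n ≤ f ∧ f < u (n+1)}).Finite := by
    refine (((hF.preimage humono.injective.injOn).union ?_).union
      (hF.preimage hwmono.injective.injOn)).union ?_
    · exact (hF.preimage (humono.comp (fun a b => Nat.succ_lt_succ)).injective.injOn)
    · have hsub : {n | ∃ f ∈ F, u n ≤ f ∧ f < u (n+1)} ⊆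
          ⋃ f ∈ F, {n | u n ≤ f ∧ f < u (n+1)} := by
        rintro n ⟨f, hf, h⟩
        exact Set.mem_biUnion hf h
      refine Set.Finite.subset (Set.Finite.biUnion hF fun f _ => ?_) hsub
      apply Set.Subsingleton.finite
      intro a ha b hb
      by_contra hne
      rcases lt_or_gt_of_ne hne with h | h
      · exact absurd ((humono.monotone (Nat.succ_le_of_lt h)).trans hb.1) (not_le.2 ha.2)
      · exact absurd ((humono.monotone (Nat.succ_le_of_lt h)).trans ha.1) (not_le.2 hb.2)
  obtain ⟨N, hN⟩ := hbad.infinite_compl.nonempty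
  simp only [Set.mem_compl_iff, Set.mem_union, Set.mem_setOf_eq, not_or] at hN
  obtain ⟨⟨⟨huNF, huN1F⟩, hwNF⟩, hTN⟩ := hN
  have hside : ∀ f ∈ F, f < u N ∨ u (N+1) < f := by
    intro f hf
    rcases le_or_gt (u N) f with h | h
    · right
      have h' : ¬ f < u (N+1) := fun hlt => hTN ⟨f, hf, h, hlt⟩
      exact lt_of_le_of_ne (not_lt.1 h') fun he => huN1F (he ▸ hf)
    · left; exact h
  have huNwN : u N < w N := hlt1 N
  have hwNuN1 : w N < u (N+1) := hlt2 N
  have huNuN1 : u N < u (N+1) := huNwN.trans hwNuN1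
  -- comparison of `F`-elements with the triple
  have t_le_f : ∀ v, (v = u N ∨ v = w N ∨ v = u (N+1)) → ∀ f ∈ F,
      (R.le v f ↔ u (N+1) < f) := by
    intro v hv f hf
    have huNv : u N ≤ v := by
      rcases hv with rfl | rfl | rfl
      · exact le_rfl
      · exact huNwN.le
      · exact huNuN1.le
    have hvuN1 : v ≤ u (N+1) := by
      rcases hv with rfl | rfl | rfl
      · exact huNuN1.le
      · exact hwNuN1.le
      · exact le_rfl
    rcases hside f hf with h | h
    · exact iff_of_false (fun hle => absurd (huNv.trans hle) (not_le.2 h))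
        (fun hlt => absurd (h.trans huNuN1) (not_lt.2 hlt.le))
    · exact iff_of_true (hvuN1.trans h.le) h
  have f_le_t : ∀ v, (v = u N ∨ v = w N ∨ v = u (N+1)) → ∀ f ∈ F,
      (R.le f v ↔ f < u N) := by
    intro v hv f hf
    have huNv : u N ≤ v := by
      rcases hv with rfl | rfl | rfl
      · exact le_rfl
      · exact huNwN.le
      · exact huNuN1.le
    have hvuN1 : v ≤ u (N+1) := by
      rcases hv with rfl | rfl | rfl
      · exact huNuN1.le
      · exact hwNuN1.le
      · exact le_rfl
    rcases hside f hf with h | h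
    · exact iff_of_true (le_trans h.le huNv) h
    · exact iff_of_false (fun hle => absurd (h.trans_le (le_trans hle hvuN1)) (lt_irrefl (u (N+1))))
        (fun hlt => absurd (hlt.trans huNuN1) (not_lt.2 h.le))
  -- distinctness of triple from F
  have hne_wu : w N ≠ u N := huNwN.ne'
  have hne_wu1 : w N ≠ u (N+1) := hwNuN1.ne
  have hne_uu1 : u N ≠ u (N+1) := huNuN1.ne
  set A₁ := insert (u N) (insert (w N) F) with hA₁
  set A₂ := insert (w N) (insert (u (N+1)) F) with hA₂d
  have hA₁fin : A₁.Finite := (hF.insert _).insert _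
  have hA₂fin : A₂.Finite := (hF.insert _).insert _
  have hmemA₁ : ∀ v, v ∈ A₁ ↔ v = u N ∨ v = w N ∨ v ∈ F := by
    intro v; simp [hA₁, Set.mem_insert_iff]
  have hmemA₂ : ∀ v, v ∈ A₂ ↔ v = w N ∨ v = u (N+1) ∨ v ∈ F := by
    intro v; simp [hA₂d, Set.mem_insert_iff]
  have hiso12 : Iso (R.restrict A₁) (R.restrict A₂) := by
    apply hC A₁ A₂ hA₁fin hA₂fin
    · rw [hA₁, hA₂d,
        Set.ncard_insert_of_notMem (by simp [huNwN.ne, huNF]) (hF.insert _),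
        Set.ncard_insert_of_notMem (by simp [hne_wu1, hwNF]) (hF.insert _),
        Set.ncard_insert_of_notMem hwNF hF,
        Set.ncard_insert_of_notMem huN1F hF]
    · rw [hA₂d, Set.insert_comm, Set.insert_diff_of_mem _ (hu (N+1)), hA₁,
        Set.insert_diff_of_mem _ (hu N)]
  set σ : R.V → R.V := fun v => if v = u N then w N else if v = w N then u (N+1) else v
    with hσ
  have hσu : σ (u N) = w N := by simp [hσ]
  have hσw : σ (w N) = u (N+1) := by simp [hσ, hne_wu]
  have hσF : ∀ f ∈ F, σ f = f := by
    intro f hf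
    have h1 : f ≠ u N := fun h => huNF (h ▸ hf)
    have h2 : f ≠ w N := fun h => hwNF (h ▸ hf)
    simp [hσ, h1, h2]
  have hσtriple : ∀ v ∈ A₁, σ v = w N ∨ σ v = u (N+1) ∨ (v ∈ F ∧ σ v = v) := by
    intro v hv
    rcases (hmemA₁ v).1 hv with rfl | rfl | hvF
    · exact Or.inl hσu
    · exact Or.inr (Or.inl hσw)
    · exact Or.inr (Or.inr ⟨hvF, hσF v hvF⟩)
  have hle_iff : ∀ a ∈ A₁, ∀ b ∈ A₁, (R.le a b ↔ R.le (σ a) (σ b)) := by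
    intro a ha b hb
    rcases (hmemA₁ a).1 ha with rfl | rfl | haF
    · rcases (hmemA₁ b).1 hb with rfl | rfl | hbF
      · rw [hσu]
        exact iff_of_true (le_refl (u N)) (le_refl (w N))
      · rw [hσu, hσw]
        exact iff_of_true huNwN.le hwNuN1.le
      · rw [hσu, hσF b hbF, t_le_f (u N) (Or.inl rfl) b hbF,
          t_le_f (w N) (Or.inr (Or.inl rfl)) b hbF]
    · rcases (hmemA₁ b).1 hb with rfl | rfl | hbF
      · rw [hσu, hσw]
        exact iff_of_false (not_le.2 huNwN) (not_le.2 hwNuN1)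
      · rw [hσw]
        exact iff_of_true (le_refl (w N)) (le_refl (u (N+1)))
      · rw [hσw, hσF b hbF, t_le_f (w N) (Or.inr (Or.inl rfl)) b hbF,
          t_le_f (u (N+1)) (Or.inr (Or.inr rfl)) b hbF]
    · rcases (hmemA₁ b).1 hb with rfl | rfl | hbF
      · rw [hσF a haF, hσu, f_le_t (u N) (Or.inl rfl) a haF,
          f_le_t (w N) (Or.inr (Or.inl rfl)) a haF]
      · rw [hσF a haF, hσw, f_le_t (w N) (Or.inr (Or.inl rfl)) a haF,
          f_le_t (u (N+1)) (Or.inr (Or.inr rfl)) a haF]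
      · rw [hσF a haF, hσF b hbF]
  have hrelσ : ∀ (i : ι) (a b : A₁), R.rel i a.1 b.1 ↔ R.rel i (σ a.1) (σ b.1) := by
    apply rel_transfer R hA₁fin hiso12 (fun a : A₁ => σ a.1)
    · intro a
      rcases hσtriple a.1 a.2 with h | h | ⟨hf, h⟩
      · rw [h]; exact (hmemA₂ _).2 (Or.inl rfl)
      · rw [h]; exact (hmemA₂ _).2 (Or.inr (Or.inl rfl))
      · rw [h]; exact (hmemA₂ _).2 (Or.inr (Or.inr hf))
    · intro a b hab
      apply Subtype.ext
      have hab' : σ a.1 = σ b.1 := hab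
      rcases (hmemA₁ a.1).1 a.2 with ha | ha | ha <;>
        rcases (hmemA₁ b.1).1 b.2 with hb | hb | hb
      · rw [ha, hb]
      · rw [ha, hb, hσu, hσw] at hab'
        exact absurd hab' hne_wu1
      · rw [ha, hσu, hσF b.1 hb] at hab'
        rw [← hab'] at hb
        exact absurd hb hwNF
      · rw [ha, hb, hσu, hσw] at hab'
        exact absurd hab'.symm hne_wu1
      · rw [ha, hb]
      · rw [ha, hσw, hσF b.1 hb] at hab'
        rw [← hab'] at hb
        exact absurd hb huN1F
      · rw [hb, hσu, hσF a.1 ha] at hab'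
        rw [hab'] at ha
        exact absurd ha hwNF
      · rw [hb, hσw, hσF a.1 ha] at hab'
        rw [hab'] at ha
        exact absurd ha huN1F
      · rw [hσF a.1 ha, hσF b.1 hb] at hab'
        exact hab'
    · intro b hb
      rcases (hmemA₂ b).1 hb with rfl | rfl | hbF
      · exact ⟨⟨u N, (hmemA₁ _).2 (Or.inl rfl)⟩, hσu⟩
      · exact ⟨⟨w N, (hmemA₁ _).2 (Or.inr (Or.inl rfl))⟩, hσw⟩
      · exact ⟨⟨b, (hmemA₁ _).2 (Or.inr (Or.inr hbF))⟩, hσF b hbF⟩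
    · intro a b
      exact hle_iff a.1 a.2 b.1 b.2
  -- now build the iso between `insert (u N) F` and `insert (w N) F`
  have hSiso : Iso (R.restrict (insert (u N) F)) (R.restrict (insert (w N) F)) := by
    set τ : R.V → R.V := fun v => if v = u N then w N else v with hτ
    have hτu : τ (u N) = w N := by simp [hτ]
    have hτF : ∀ f ∈ F, τ f = f := by
      intro f hf
      have h1 : f ≠ u N := fun h => huNF (h ▸ hf)
      simp [hτ, h1]
    have hmemS₁ : ∀ v, v ∈ (insert (u N) F : Set R.V) ↔ v = u N ∨ v ∈ F := by
      intro v; simp [Set.mem_insert_iff]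
    have hS₁A₁ : ∀ v, v ∈ (insert (u N) F : Set R.V) → v ∈ A₁ := by
      intro v hv
      rcases (hmemS₁ v).1 hv with rfl | h
      · exact (hmemA₁ _).2 (Or.inl rfl)
      · exact (hmemA₁ _).2 (Or.inr (Or.inr h))
    have hστ : ∀ v, v ∈ (insert (u N) F : Set R.V) → σ v = τ v := by
      intro v hv
      rcases (hmemS₁ v).1 hv with rfl | h
      · rw [hσu, hτu]
      · rw [hσF v h, hτF v h]
    apply iso_restrict_of_map R (fun a : (insert (u N) F : Set R.V) => τ a.1)
    · intro a
      rcases (hmemS₁ a.1).1 a.2 with h | h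
      · rw [h, hτu]; exact Set.mem_insert _ _
      · rw [hτF a.1 h]; exact Set.mem_insert_of_mem _ h
    · intro a b hab
      apply Subtype.ext
      have hab' : τ a.1 = τ b.1 := hab
      rcases (hmemS₁ a.1).1 a.2 with ha | ha <;> rcases (hmemS₁ b.1).1 b.2 with hb | hb
      · rw [ha, hb]
      · rw [ha, hτu, hτF b.1 hb] at hab'
        rw [← hab'] at hb
        exact absurd hb hwNF
      · rw [hb, hτu, hτF a.1 ha] at hab'
        rw [hab'] at ha
        exact absurd ha hwNF
      · rw [hτF a.1 ha, hτF b.1 hb] at hab'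
        exact hab'
    · intro b hb
      rcases Set.mem_insert_iff.1 hb with rfl | hbF
      · exact ⟨⟨u N, Set.mem_insert _ _⟩, hτu⟩
      · refine ⟨⟨b, Set.mem_insert_of_mem _ hbF⟩, hτF b hbF⟩
    · intro a b
      have := hle_iff a.1 (hS₁A₁ a.1 a.2) b.1 (hS₁A₁ b.1 b.2)
      rwa [hστ a.1 a.2, hστ b.1 b.2] at this
    · intro i a b
      have := hrelσ i ⟨a.1, hS₁A₁ a.1 a.2⟩ ⟨b.1, hS₁A₁ b.1 b.2⟩
      rwa [hστ a.1 a.2, hστ b.1 b.2] at this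
  exact ((huu 0 N).iso_insert hF hu0F huNF).trans
    (hSiso.trans ((hww N 0).iso_insert hF hwNF hw0F))

def Btw (R : OrdBin ι) (a b z : R.V) : Prop :=
  (R.le a z ∧ R.le z b) ∨ (R.le b z ∧ R.le z a)

/-- The refined equivalence: `x ~ y` iff `x ≃ y` and every element between them
is equivalent to `x`. Its classes are intervals. -/
def Tilde (R : OrdBin ι) (x y : R.V) : Prop :=
  EqR R x y ∧ ∀ z, Btw R x y z → EqR R x z

theorem Tilde.refl' (R : OrdBin ι) (x : R.V) : Tilde R x x := by
  haveI := R.linear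
  refine ⟨EqR.refl' R x, fun z hz => ?_⟩
  have hzx : z = x := by
    rcases hz with ⟨h1, h2⟩ | ⟨h1, h2⟩ <;> exact antisymm_of R.le h2 h1
  rw [hzx]
  exact EqR.refl' R x

theorem Tilde.symm' {R : OrdBin ι} {x y : R.V} (h : Tilde R x y) : Tilde R y x := by
  refine ⟨h.1.symm', fun z hz => ?_⟩
  have hz' : Btw R x y z := hz.symm
  exact h.1.symm'.trans' (h.2 z hz')

theorem Tilde.trans'' {R : OrdBin ι} {x y w : R.V} (h1 : Tilde R x y) (h2 : Tilde R y w) :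
    Tilde R x w := by
  haveI := R.linear
  refine ⟨h1.1.trans' h2.1, fun z hz => ?_⟩
  rcases hz with ⟨ha, hb⟩ | ⟨ha, hb⟩
  · rcases total_of R.le z y with hzy | hyz
    · exact h1.2 z (Or.inl ⟨ha, hzy⟩)
    · exact h1.1.trans' (h2.2 z (Or.inl ⟨hyz, hb⟩))
  · rcases total_of R.le z y with hzy | hyz
    · exact h1.1.trans' (h2.2 z (Or.inr ⟨ha, hzy⟩))
    · exact h1.2 z (Or.inr ⟨hyz, hb⟩)

def setoidR (R : OrdBin ι) : Setoid R.V :=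
  ⟨EqR R, ⟨EqR.refl' R, EqR.symm', EqR.trans'⟩⟩

def setoidT (R : OrdBin ι) : Setoid R.V :=
  ⟨Tilde R, ⟨Tilde.refl' R, Tilde.symm', Tilde.trans''⟩⟩

theorem tilde_class_interval (R : OrdBin ι) (v : R.V) :
    IntervalLe R {x | Tilde R v x} := by
  haveI := R.linear
  intro a ha b hb z hza hzb
  have hav : Tilde R a v := Tilde.symm' ha
  have hab : Tilde R a b := hav.trans'' hb
  have haz : EqR R a z := hab.2 z (Or.inl ⟨hza, hzb⟩)
  have hvz : EqR R v z := ha.1.trans' haz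
  refine ⟨hvz, fun z' hz' => ?_⟩
  rcases hz' with ⟨h1, h2⟩ | ⟨h1, h2⟩
  · rcases total_of R.le z' a with hza' | haz'
    · exact ha.2 z' (Or.inl ⟨h1, hza'⟩)
    · exact ha.1.trans' (hab.2 z' (Or.inl ⟨haz', trans_of R.le h2 hzb⟩))
  · rcases total_of R.le z' a with hza' | haz'
    · have hz'a : z' = a := antisymm_of R.le hza' (trans_of R.le hza h1)
      rw [hz'a]
      exact ha.1
    · exact ha.2 z' (Or.inr ⟨haz', h2⟩)

/-- Monotone subsequence extraction. -/
theorem exists_mono_subseq {β : Type} [LinearOrder β] (c : ℕ → β)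
    (hinj : Function.Injective c) :
    ∃ φ : ℕ → ℕ, StrictMono φ ∧ (StrictMono (c ∘ φ) ∨ StrictAnti (c ∘ φ)) := by
  classical
  by_cases hpk : {n | ∀ m, n < m → c m < c n}.Infinite
  · refine ⟨Nat.nth (· ∈ {n | ∀ m, n < m → c m < c n}), Nat.nth_strictMono hpk, Or.inr ?_⟩
    intro a b hab
    exact Nat.nth_mem_of_infinite hpk a _ (Nat.nth_strictMono hpk hab)
  · rw [Set.not_infinite] at hpk
    obtain ⟨N, hN⟩ := hpk.bddAbove
    have key : ∀ n, N < n → ∃ m, n < m ∧ c n < c m := by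
      intro n hn
      have hmem : n ∉ {n | ∀ m, n < m → c m < c n} := fun h => absurd (hN h) (not_le.2 hn)
      simp only [Set.mem_setOf_eq, not_forall] at hmem
      obtain ⟨m, hm1, hm2⟩ := hmem
      refine ⟨m, hm1, lt_of_le_of_ne (not_lt.1 hm2) fun h => ?_⟩
      rw [hinj h] at hm1
      exact Nat.lt_irrefl m hm1
    let g : {n // N < n} → {n // N < n} := fun p =>
      ⟨Classical.choose (key p.1 p.2), lt_trans p.2 (Classical.choose_spec (key p.1 p.2)).1⟩
    let start : {n // N < n} := ⟨N + 1, Nat.lt_succ_self N⟩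
    let φ : ℕ → ℕ := fun k => (g^[k] start).1
    have hstep : ∀ k, φ k < φ (k + 1) ∧ c (φ k) < c (φ (k + 1)) := by
      intro k
      have hit : g^[k + 1] start = g (g^[k] start) := Function.iterate_succ_apply' g k start
      constructor
      · show (g^[k] start).1 < (g^[k + 1] start).1
        rw [hit]
        exact (Classical.choose_spec (key (g^[k] start).1 (g^[k] start).2)).1
      · show c (g^[k] start).1 < c (g^[k + 1] start).1
        rw [hit]
        exact (Classical.choose_spec (key (g^[k] start).1 (g^[k] start).2)).2
    exact ⟨φ, strictMono_nat_of_lt_succ fun k => (hstep k).1,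
      Or.inl (strictMono_nat_of_lt_succ fun k => (hstep k).2)⟩

theorem iso_unflip {R : OrdBin ι} {A B : Set R.V} :
    Iso (R.oflip.restrict A) (R.oflip.restrict B) → Iso (R.restrict A) (R.restrict B) := by
  rintro ⟨e, h1, h2⟩
  exact ⟨e, fun x y => h1 y x, h2⟩

theorem EqR.unflip {R : OrdBin ι} {x y : R.V} (h : EqR R.oflip x y) : EqR R x y :=
  fun m F hF hFm hx hy => iso_unflip (h m F hF hFm hx hy)

theorem finiteClassesR (R : OrdBin ι) (h : HasFiniteMonoDecomp R) :
    Finite (Quotient (setoidR R)) := by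
  obtain ⟨P, ⟨⟨hpart, hmono⟩, hPfin⟩⟩ := h
  haveI : Finite ↥P := hPfin
  have hne : ∀ B : ↥P, (B.1 : Set R.V).Nonempty := by
    intro B
    rcases Set.eq_empty_or_nonempty B.1 with he | hne
    · exact absurd (he ▸ B.2) hpart.1
    · exact hne
  apply Finite.of_surjective (fun B : ↥P => Quotient.mk (setoidR R) (hne B).some)
  intro q
  obtain ⟨v, hv⟩ := Quotient.exists_rep q
  obtain ⟨B, ⟨hBP, hvB⟩, _⟩ := hpart.2 v
  refine ⟨⟨B, hBP⟩, ?_⟩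
  rw [← hv]
  exact Quotient.sound ((hmono B hBP).eqR (hne ⟨B, hBP⟩).some_mem hvB)

theorem finiteClassesT (R : OrdBin ι) (h : HasFiniteMonoDecomp R) :
    Finite (Quotient (setoidT R)) := by
  classical
  letI := R.linOrd
  haveI hQR : Finite (Quotient (setoidR R)) := finiteClassesR R h
  by_contra hfin
  rw [not_finite_iff_infinite] at hfin
  let q : Quotient (setoidT R) → Quotient (setoidR R) :=
    Quotient.lift (fun v => Quotient.mk (setoidR R) v)
      (fun a b hab => Quotient.sound hab.1)
  obtain ⟨qc, hqc⟩ := Finite.exists_infinite_fiber q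
  haveI := hqc
  let emb : ℕ ↪ ↥(q ⁻¹' {qc}) := Infinite.natEmbedding _
  let tq : ℕ → Quotient (setoidT R) := fun n => (emb n).1
  have htqinj : Function.Injective tq := fun a b hab => emb.injective (Subtype.ext hab)
  have htqfib : ∀ n, q (tq n) = qc := fun n => (emb n).2
  let c : ℕ → R.V := fun n => (tq n).out
  have hcmk : ∀ n, Quotient.mk (setoidT R) (c n) = tq n := fun n => Quotient.out_eq _
  have hcinj : Function.Injective c := by
    intro a b hab
    apply htqinj
    rw [← hcmk a, ← hcmk b, hab]
  have hceq : ∀ n m, EqR R (c n) (c m) := by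
    intro n m
    have h1 : Quotient.mk (setoidR R) (c n) = Quotient.mk (setoidR R) (c m) := by
      have e1 : q (tq n) = q (tq m) := by rw [htqfib, htqfib]
      rw [← hcmk n, ← hcmk m] at e1
      exact e1
    exact Quotient.exact h1
  have hcnT : ∀ n m, n ≠ m → ¬ Tilde R (c n) (c m) := by
    intro n m hnm hT
    exact hnm (htqinj (by rw [← hcmk n, ← hcmk m]; exact Quotient.sound hT))
  obtain ⟨φ, hφ, hmono⟩ := exists_mono_subseq c hcinj
  have hzex : ∀ n, ∃ z, Btw R (c (φ n)) (c (φ (n+1))) z ∧ ¬ EqR R (c (φ n)) z := by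
    intro n
    have hnT := hcnT (φ n) (φ (n+1)) (hφ.injective.ne (Nat.succ_ne_self n).symm)
    rcases not_and_or.1 hnT with h1 | h2
    · exact absurd (hceq _ _) h1
    · push_neg at h2
      exact h2
  choose z hz1 hz2 using hzex
  obtain ⟨qd, hqd⟩ := Finite.exists_infinite_fiber (fun n => Quotient.mk (setoidR R) (z n))
  have hIinf : ((fun n => Quotient.mk (setoidR R) (z n)) ⁻¹' {qd}).Infinite :=
    Set.infinite_coe_iff.mp hqd
  let ψ : ℕ → ℕ := Nat.nth (· ∈ (fun n => Quotient.mk (setoidR R) (z n)) ⁻¹' {qd})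
  have hψmono : StrictMono ψ := Nat.nth_strictMono hIinf
  have hψmem : ∀ k, Quotient.mk (setoidR R) (z (ψ k)) = qd := fun k =>
    Nat.nth_mem_of_infinite hIinf k
  have hzeq : ∀ k l, EqR R (z (ψ k)) (z (ψ l)) := by
    intro k l
    have hmk : Quotient.mk (setoidR R) (z (ψ k)) = Quotient.mk (setoidR R) (z (ψ l)) := by
      rw [hψmem k, hψmem l]
    exact Quotient.exact hmk
  set U : ℕ → R.V := fun k => c (φ (ψ k)) with hU
  set W : ℕ → R.V := fun k => z (ψ k) with hW
  have hUeq : ∀ k l, EqR R (U k) (U l) := fun k l => hceq _ _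
  have hnUW : ∀ k, ¬ EqR R (U k) (W k) := fun k => hz2 (ψ k)
  set C : Set R.V := {t | EqR R (U 0) t} with hC
  have hCmono : MonoPart R C := class_monoPart R (U 0)
  have hUC : ∀ k, U k ∈ C := fun k => hUeq 0 k
  have hWC : ∀ k, W k ∉ C := by
    intro k hk
    exact hnUW k ((hUeq k 0).trans' hk)
  have hψsucc : ∀ k, ψ k + 1 ≤ ψ (k+1) := fun k =>
    Nat.succ_le_of_lt (hψmono (Nat.lt_succ_self k))
  rcases hmono with hM | hA
  · -- increasing case
    have hch : ∀ n, R.le (c (φ n)) (z n) ∧ R.le (z n) (c (φ (n+1))) := by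
      intro n
      rcases hz1 n with hgood | ⟨l1, l2⟩
      · exact hgood
      · exact absurd (le_trans l1 l2) (not_le.2 (hM (Nat.lt_succ_self n)))
    have hc1 : ∀ k, R.le (U k) (W k) ∧ U k ≠ W k := by
      intro k
      refine ⟨(hch (ψ k)).1, fun he => hnUW k ?_⟩
      rw [← he]
      exact EqR.refl' R (U k)
    have hc2 : ∀ k, R.le (W k) (U (k+1)) ∧ W k ≠ U (k+1) := by
      intro k
      constructor
      · exact le_trans (hch (ψ k)).2 (hM.monotone (hψsucc k))
      · intro he
        apply hnUW k
        rw [he]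
        exact hUeq k (k+1)
    exact hWC 0 (key_contra R hCmono U W hUC hUeq (fun k l => hzeq k l) hc1 hc2 hWC)
  · -- decreasing case: use the order-reversed structure
    have hch : ∀ n, R.le (c (φ (n+1))) (z n) ∧ R.le (z n) (c (φ n)) := by
      intro n
      rcases hz1 n with ⟨l1, l2⟩ | hgood
      · exact absurd (le_trans l1 l2) (not_le.2 (hA (Nat.lt_succ_self n)))
      · exact hgood
    have hc1 : ∀ k, R.oflip.le (U k) (W k) ∧ U k ≠ W k := by
      intro k
      refine ⟨(hch (ψ k)).2, fun he => hnUW k ?_⟩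
      rw [← he]
      exact EqR.refl' R (U k)
    have hc2 : ∀ k, R.oflip.le (W k) (U (k+1)) ∧ W k ≠ U (k+1) := by
      intro k
      constructor
      · exact le_trans (hA.antitone (hψsucc k)) (hch (ψ k)).1
      · intro he
        apply hnUW k
        rw [he]
        exact hUeq k (k+1)
    have hres := key_contra R.oflip (hCmono.oflip) U W hUC
      (fun k l => (hUeq k l).oflip) (fun k l => (hzeq k l).oflip) hc1 hc2 hWC
    exact hWC 0 hres.unflip

theorem forward_dir (R : OrdBin ι) (h : HasFiniteMonoDecomp R) :
    ∃ (m : ℕ) (W : Fin m → Set R.V),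
      (∀ j : Fin m, OrdBin.IntervalLe R (W j)) ∧
      (∀ j j' : Fin m, j ≠ j' → Disjoint (W j) (W j')) ∧
      (⋃ j : Fin m, W j) = Set.univ ∧
      ∀ A : Set R.V, A.Finite → ∀ g : A → R.V, Function.Injective g →
        (∀ a b : A, R.le a.1 b.1 ↔ R.le (g a) (g b)) →
        (∀ (j : Fin m) (a : A), a.1 ∈ W j → g a ∈ W j) →
        ∀ (i : ι) (a b : A), R.rel i a.1 b.1 ↔ R.rel i (g a) (g b) := by
  classical
  haveI hQT : Finite (Quotient (setoidT R)) := finiteClassesT R h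
  obtain ⟨m, ⟨em⟩⟩ := Finite.exists_equiv_fin (Quotient (setoidT R))
  refine ⟨m, fun j => {v | Quotient.mk (setoidT R) v = em.symm j}, ?_, ?_, ?_, ?_⟩
  · intro j
    have hWeq : {v | Quotient.mk (setoidT R) v = em.symm j}
        = {x | Tilde R ((em.symm j).out) x} := by
      ext x
      simp only [Set.mem_setOf_eq]
      constructor
      · intro hx
        exact Quotient.exact ((Quotient.out_eq (em.symm j)).trans hx.symm)
      · intro hx
        rw [← Quotient.out_eq (em.symm j)]
        exact (Quotient.sound hx).symm
    have hti := tilde_class_interval R ((em.symm j).out)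
    rwa [← hWeq] at hti
  · intro j j' hjj'
    rw [Set.disjoint_left]
    intro v hv hv'
    exact hjj' (em.symm.injective ((hv : _ = _).symm.trans hv'))
  · ext v
    simp only [Set.mem_iUnion, Set.mem_univ, iff_true, Set.mem_setOf_eq]
    exact ⟨em (Quotient.mk (setoidT R) v), (Equiv.symm_apply_apply em _).symm⟩
  · intro A hA g hginj hgle hgW i a b
    haveI := hA.to_subtype
    have hEq : ∀ a : A, EqR R a.1 (g a) := by
      intro a
      have h1 : Quotient.mk (setoidT R) a.1
          = em.symm (em (Quotient.mk (setoidT R) a.1)) := (Equiv.symm_apply_apply em _).symm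
      have h2 := hgW (em (Quotient.mk (setoidT R) a.1)) a h1
      have h3 : Quotient.mk (setoidT R) a.1 = Quotient.mk (setoidT R) (g a) :=
        h1.trans (h2 : _ = _).symm
      exact (Quotient.exact h3 : Tilde R a.1 (g a)).1
    set g₀ : R.V → R.V := fun v => if hv : v ∈ A then g ⟨v, hv⟩ else v with hg₀
    have hg₀A : ∀ (v) (hv : v ∈ A), g₀ v = g ⟨v, hv⟩ := fun v hv => dif_pos hv
    have hinj₀ : Set.InjOn g₀ A := by
      intro x hx y hy hxy
      rw [hg₀A x hx, hg₀A y hy] at hxy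
      exact congrArg Subtype.val (hginj hxy)
    set A' : Set R.V := g₀ '' A with hA'def
    have hA'fin : A'.Finite := hA.image _
    have hrange : ∀ a : A, g a ∈ A' := fun a => ⟨a.1, a.2, hg₀A a.1 a.2⟩
    have hcounts : ∀ v : R.V, (A ∩ {t | EqR R v t}).ncard
        = (A' ∩ {t | EqR R v t}).ncard := by
      intro v
      have himg : A' ∩ {t | EqR R v t} = g₀ '' (A ∩ {t | EqR R v t}) := by
        ext x
        constructor
        · rintro ⟨⟨a0, ha0, rfl⟩, hx⟩
          refine ⟨a0, ⟨ha0, ?_⟩, rfl⟩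
          have h4 := hEq ⟨a0, ha0⟩
          rw [hg₀A a0 ha0] at hx
          exact (hx : EqR R v _).trans' h4.symm'
        · rintro ⟨a0, ⟨ha0, hva0⟩, rfl⟩
          refine ⟨⟨a0, ha0, rfl⟩, ?_⟩
          have h4 := hEq ⟨a0, ha0⟩
          show EqR R v (g₀ a0)
          rw [hg₀A a0 ha0]
          exact (hva0 : EqR R v a0).trans' h4
      rw [himg, Set.ncard_image_of_injOn (hinj₀.mono Set.inter_subset_left)]
    have hiso := chain_iso R ((A \ A').ncard) A A' hA hA'fin hcounts rfl
    have hsurj : ∀ b' ∈ A', ∃ a : A, g a = b' := by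
      rintro b' ⟨a0, ha0, rfl⟩
      exact ⟨⟨a0, ha0⟩, (hg₀A a0 ha0).symm⟩
    exact rel_transfer R hA hiso (fun a : A => g a) hrange hginj hsurj hgle i a b

theorem backward_dir (R : OrdBin ι) (m : ℕ) (W : Fin m → Set R.V)
    (hint : ∀ j, IntervalLe R (W j))
    (hdisj : ∀ j j', j ≠ j' → Disjoint (W j) (W j'))
    (hcov : (⋃ j, W j) = Set.univ)
    (hloc : ∀ A : Set R.V, A.Finite → ∀ g : A → R.V, Function.Injective g →
      (∀ a b : A, R.le a.1 b.1 ↔ R.le (g a) (g b)) →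
      (∀ (j : Fin m) (a : A), a.1 ∈ W j → g a ∈ W j) →
      ∀ (i : ι) (a b : A), R.rel i a.1 b.1 ↔ R.rel i (g a) (g b)) :
    HasFiniteMonoDecomp R := by
  classical
  letI := R.linOrd
  haveI := R.linear
  have hmemW : ∀ v : R.V, ∃ j, v ∈ W j := by
    intro v
    have hv : v ∈ ⋃ j, W j := hcov ▸ Set.mem_univ v
    simpa using hv
  -- the interval dichotomy
  have hdich : ∀ (j) (z), z ∉ W j → (∀ t ∈ W j, R.le z t) ∨ (∀ t ∈ W j, R.le t z) := by
    intro j z hz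
    by_cases hall : ∀ t ∈ W j, R.le z t
    · exact Or.inl hall
    · push_neg at hall
      obtain ⟨t₁, ht₁, ht₁'⟩ := hall
      have ht₁z : R.le t₁ z := by
        haveI := R.linear
        rcases total_of R.le z t₁ with h | h
        · exact absurd h ht₁'
        · exact h
      right
      intro t₂ ht₂
      by_contra ht₂'
      have hzt₂ : R.le z t₂ := by
        haveI := R.linear
        rcases total_of R.le t₂ z with h | h
        · exact absurd h ht₂'
        · exact h
      exact hz (hint j t₁ ht₁ t₂ ht₂ z ht₁z hzt₂)
  have hMP : ∀ j, MonoPart R (W j) := by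
    intro j A A' hA hA' hcard hdiff
    set X := A ∩ W j with hXdef
    set Y := A' ∩ W j with hYdef
    have hXfin : X.Finite := hA.inter_of_left _
    have hYfin : Y.Finite := hA'.inter_of_left _
    have hYW : Y ⊆ W j := Set.inter_subset_right
    have hXY : X.ncard = Y.ncard := by
      have e1 := Set.ncard_inter_add_ncard_diff_eq_ncard A (W j) hA
      have e2 := Set.ncard_inter_add_ncard_diff_eq_ncard A' (W j) hA'
      rw [hdiff] at e1
      rw [← hXdef] at e1
      rw [← hYdef] at e2
      omega
    set n := X.ncard with hndef
    set sX : Finset R.V := hXfin.toFinset with hsXdef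
    set sY : Finset R.V := hYfin.toFinset with hsYdef
    have hsX : sX.card = n := (Set.ncard_eq_toFinset_card _ hXfin).symm
    have hsY : sY.card = n := by
      rw [← Set.ncard_eq_toFinset_card _ hYfin, ← hXY]
    let θ : X → R.V := fun x =>
      sY.orderEmbOfFin hsY ((sX.orderIsoOfFin hsX).symm ⟨x.1, hXfin.mem_toFinset.2 x.2⟩)
    have hθY : ∀ x, θ x ∈ Y := fun x =>
      hYfin.mem_toFinset.1 (Finset.orderEmbOfFin_mem sY hsY _)
    have hθinj : Function.Injective θ := by
      intro x y hxy
      have h1 := (sY.orderEmbOfFin hsY).injective hxy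
      have h2 := (sX.orderIsoOfFin hsX).symm.injective h1
      have h3 := congrArg Subtype.val h2
      exact Subtype.ext h3
    have hθcoe : ∀ v : ↥sX, θ ⟨v.1, hXfin.mem_toFinset.1 v.2⟩
        = sY.orderEmbOfFin hsY ((sX.orderIsoOfFin hsX).symm v) := fun v =>
      congrArg (fun t => sY.orderEmbOfFin hsY ((sX.orderIsoOfFin hsX).symm t))
        (Subtype.ext rfl)
    have hθsurj : ∀ b ∈ Y, ∃ x : X, θ x = b := by
      intro b hb
      have hbs : b ∈ sY := hYfin.mem_toFinset.2 hb
      have hbr : b ∈ Set.range (sY.orderEmbOfFin hsY) := by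
        rw [Finset.range_orderEmbOfFin]
        exact hbs
      obtain ⟨i, hi⟩ := hbr
      refine ⟨⟨((sX.orderIsoOfFin hsX) i).1,
        hXfin.mem_toFinset.1 ((sX.orderIsoOfFin hsX) i).2⟩, ?_⟩
      rw [hθcoe ((sX.orderIsoOfFin hsX) i), OrderIso.symm_apply_apply]
      exact hi
    have hθle : ∀ x y : X, R.le x.1 y.1 ↔ R.le (θ x) (θ y) := by
      intro x y
      show x.1 ≤ y.1 ↔ sY.orderEmbOfFin hsY _ ≤ sY.orderEmbOfFin hsY _
      rw [OrderEmbedding.le_iff_le, OrderIso.le_iff_le]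
      exact Iff.rfl
    -- the glued map
    let e : A → R.V := fun a => if ha : a.1 ∈ W j then θ ⟨a.1, ⟨a.2, ha⟩⟩ else a.1
    have heW : ∀ (a : A) (ha : a.1 ∈ W j), e a = θ ⟨a.1, ⟨a.2, ha⟩⟩ := fun a ha => dif_pos ha
    have heO : ∀ (a : A), a.1 ∉ W j → e a = a.1 := fun a ha => dif_neg ha
    have heA' : ∀ a : A, e a ∈ A' := by
      intro a
      by_cases ha : a.1 ∈ W j
      · rw [heW a ha]
        exact (hθY _).1
      · rw [heO a ha]
        have : a.1 ∈ A' \ W j := hdiff ▸ (⟨a.2, ha⟩ : a.1 ∈ A \ W j)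
        exact this.1
    have heinj : Function.Injective e := by
      intro x y hxy
      by_cases hx : x.1 ∈ W j <;> by_cases hy : y.1 ∈ W j
      · rw [heW x hx, heW y hy] at hxy
        have h2 := hθinj hxy
        have h3 := congrArg Subtype.val h2
        exact Subtype.ext h3
      · rw [heW x hx, heO y hy] at hxy
        exact absurd (hxy ▸ hYW (hθY ⟨x.1, ⟨x.2, hx⟩⟩)) hy
      · rw [heO x hx, heW y hy] at hxy
        exact absurd (hxy.symm ▸ hYW (hθY ⟨y.1, ⟨y.2, hy⟩⟩)) hx
      · rw [heO x hx, heO y hy] at hxy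
        exact Subtype.ext hxy
    have hesurj : ∀ b ∈ A', ∃ a : A, e a = b := by
      intro b hb
      by_cases hbW : b ∈ W j
      · obtain ⟨x, hx⟩ := hθsurj b ⟨hb, hbW⟩
        refine ⟨⟨x.1, x.2.1⟩, ?_⟩
        rw [heW ⟨x.1, x.2.1⟩ x.2.2]
        rw [← hx]
      · have : b ∈ A \ W j := hdiff ▸ (⟨hb, hbW⟩ : b ∈ A' \ W j)
        exact ⟨⟨b, this.1⟩, heO ⟨b, this.1⟩ hbW⟩
    have hele : ∀ a b : A, R.le a.1 b.1 ↔ R.le (e a) (e b) := by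
      intro x y
      by_cases hx : x.1 ∈ W j <;> by_cases hy : y.1 ∈ W j
      · rw [heW x hx, heW y hy]
        exact hθle ⟨x.1, ⟨x.2, hx⟩⟩ ⟨y.1, ⟨y.2, hy⟩⟩
      · rw [heW x hx, heO y hy]
        have hθW : θ ⟨x.1, ⟨x.2, hx⟩⟩ ∈ W j := hYW (hθY _)
        rcases hdich j y.1 hy with hd | hd
        · refine iff_of_false (fun hle => ?_) (fun hle => ?_)
          · have heq := antisymm_of R.le hle (hd x.1 hx)
            rw [← heq] at hy
            exact hy hx
          · have heq := antisymm_of R.le hle (hd _ hθW)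
            rw [← heq] at hy
            exact hy hθW
        · exact iff_of_true (hd x.1 hx) (hd _ hθW)
      · rw [heO x hx, heW y hy]
        have hθW : θ ⟨y.1, ⟨y.2, hy⟩⟩ ∈ W j := hYW (hθY _)
        rcases hdich j x.1 hx with hd | hd
        · exact iff_of_true (hd y.1 hy) (hd _ hθW)
        · refine iff_of_false (fun hle => ?_) (fun hle => ?_)
          · have heq := antisymm_of R.le hle (hd y.1 hy)
            rw [heq] at hx
            exact hx hy
          · have heq := antisymm_of R.le hle (hd _ hθW)
            rw [heq] at hx
            exact hx hθW
      · rw [heO x hx, heO y hy]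
    have heWpres : ∀ (k : Fin m) (a : A), a.1 ∈ W k → e a ∈ W k := by
      intro k a hak
      by_cases ha : a.1 ∈ W j
      · have hkj : k = j := by
          by_contra hkj
          exact (hdisj k j hkj).ne_of_mem hak ha rfl
        rw [heW a ha, hkj]
        exact hYW (hθY _)
      · rw [heO a ha]
        exact hak
    have hrel := hloc A hA e heinj hele heWpres
    exact iso_restrict_of_map R e heA' heinj hesurj hele hrel
  -- assemble the decomposition
  refine ⟨{S | (∃ j, S = W j) ∧ S ≠ ∅}, ⟨⟨?_, ?_⟩, ?_⟩, ?_⟩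
  · rintro ⟨_, hne⟩
    exact hne rfl
  · intro v
    obtain ⟨j, hj⟩ := hmemW v
    refine ⟨W j, ⟨⟨⟨j, rfl⟩, fun he => (he ▸ hj : v ∈ (∅ : Set R.V))⟩, hj⟩, ?_⟩
    rintro S ⟨⟨⟨j', rfl⟩, _⟩, hvS⟩
    by_cases hjj : j' = j
    · rw [hjj]
    · exact absurd rfl ((hdisj j' j hjj).ne_of_mem hvS hj)
  · rintro B ⟨⟨j, rfl⟩, _⟩
    exact hMP j
  · apply Set.Finite.subset (Set.finite_range W)
    rintro S ⟨⟨j, rfl⟩, _⟩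
    exact ⟨j, rfl⟩

end OrdBin

/-- An ordered binary structure `R` admits a finite monomorphic
decomposition iff there is a finite partition of its domain into intervals of the linear
order such that every isomorphism between finite induced suborders of `(V, ≤)` mapping
each interval into itself is a local isomorphism of `R`. -/
theorem hasFiniteMonoDecomp_iff_interval_partition {ι : Type} (R : OrdBin ι) :
    R.HasFiniteMonoDecomp ↔
      ∃ (m : ℕ) (W : Fin m → Set R.V),
        (∀ j : Fin m, OrdBin.IntervalLe R (W j)) ∧
        (∀ j j' : Fin m, j ≠ j' → Disjoint (W j) (W j')) ∧
        (⋃ j : Fin m, W j) = Set.univ ∧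
        ∀ A : Set R.V, A.Finite → ∀ g : A → R.V, Function.Injective g →
          (∀ a b : A, R.le a.1 b.1 ↔ R.le (g a) (g b)) →
          (∀ (j : Fin m) (a : A), a.1 ∈ W j → g a ∈ W j) →
          ∀ (i : ι) (a b : A), R.rel i a.1 b.1 ↔ R.rel i (g a) (g b) := by
  constructor
  · intro h
    exact OrdBin.forward_dir R h
  · rintro ⟨m, W, h1, h2, h3, h4⟩
    exact OrdBin.backward_dir R m W h1 h2 h3 h4
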